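/- The random variables (y_{τ_j})_{j≥1} are mutually independent and each has the same distribution as y_1; consequently, by the strong law of large numbers, almost surely lim_{N→∞} (1/N) Σ_{j=1}^{N} y_{τ_j} = E[y_1]. -/

import Mathlib

open MeasureTheory ProbabilityTheory Filter Topology

noncomputable section

/-- Characterization of `sInf` for subsets of ℕ. -/
lemma nat_sInf_eq_iff {s : Set ℕ} {n : ℕ} :
    sInf s = n ↔ (n ∈ s ∧ ∀ m < n, m ∉ s) ∨ (n = 0 ∧ ∀ m, m ∉ s) := by
  constructor
  · rintro rfl
    by_cases hs : s.Nonempty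
    · exact Or.inl ⟨Nat.sInf_mem hs, fun m hm => Nat.notMem_of_lt_sInf hm⟩
    · rw [Set.not_nonempty_iff_eq_empty] at hs
      subst hs
      exact Or.inr ⟨Nat.sInf_empty, fun m => id⟩
  · rintro (⟨h1, h2⟩ | ⟨rfl, h⟩)
    · refine le_antisymm (Nat.sInf_le h1) ?_
      by_contra hlt
      push_neg at hlt
      exact h2 _ hlt (Nat.sInf_mem ⟨n, h1⟩)
    · have : s = ∅ := Set.eq_empty_iff_forall_notMem.2 h
      simp [this]

/-- Measurability of a pointwise `sInf` over ℕ. -/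
lemma measurable_sInf_nat {Ω : Type*} [MeasurableSpace Ω] {p : ℕ → Ω → Prop}
    (h : ∀ k, MeasurableSet {ω | p k ω}) :
    Measurable fun ω => sInf {k | p k ω} := by
  apply measurable_to_countable'
  intro n
  have : (fun ω => sInf {k | p k ω}) ⁻¹' {n} =
      ({ω | p n ω} ∩ ⋂ m, ⋂ _ : m < n, {ω | p m ω}ᶜ) ∪
      (if n = 0 then ⋂ m, {ω | p m ω}ᶜ else ∅) := by
    ext ω
    simp only [Set.mem_preimage, Set.mem_singleton_iff, nat_sInf_eq_iff, Set.mem_union,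
      Set.mem_inter_iff, Set.mem_iInter, Set.mem_compl_iff, Set.mem_setOf_eq]
    constructor
    · rintro (⟨h1, h2⟩ | ⟨rfl, h2⟩)
      · exact Or.inl ⟨h1, h2⟩
      · right
        simp only [if_pos, Set.mem_iInter, Set.mem_compl_iff, Set.mem_setOf_eq]
        exact h2
    · rintro (⟨h1, h2⟩ | h2)
      · exact Or.inl ⟨h1, h2⟩
      · by_cases hn : n = 0
        · subst hn
          simp only [if_pos, Set.mem_iInter, Set.mem_compl_iff, Set.mem_setOf_eq] at h2
          exact Or.inr ⟨rfl, h2⟩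
        · simp [if_neg hn] at h2
  rw [this]
  refine MeasurableSet.union ((h n).inter (MeasurableSet.iInter fun m =>
    MeasurableSet.iInter fun _ => (h m).compl)) ?_
  split_ifs
  · exact MeasurableSet.iInter fun m => (h m).compl
  · exact MeasurableSet.empty

/-- Measurability of a randomly-indexed random variable. -/
lemma measurable_comp_nat {Ω : Type*} [MeasurableSpace Ω] {y : ℕ → Ω → ℝ}
    (hy : ∀ k, Measurable (y k)) {τ : Ω → ℕ} (hτ : Measurable τ) :
    Measurable fun ω => y (τ ω) ω := by
  have h1 : Measurable fun p : Ω × ℕ => y p.2 p.1 :=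
    measurable_from_prod_countable_left fun n => hy n
  exact h1.comp (measurable_id.prodMk hτ)


/-- the values `y_{τ_j}` of a sequence of {0,1}-valued random variables sampled
at the successive hitting times `τ_j` of the events `{w_k = 1}` are i.i.d. with the
distribution of `y_1`; hence by the strong law of large numbers their averages converge
almost surely to `E[y_1]`. -/
theorem stmt_15
    {Ω : Type*} [MeasurableSpace Ω] (P : Measure Ω) [IsProbabilityMeasure P]
    (y w : ℕ → Ω → ℝ)
    (hy01 : ∀ k ω, y k ω = 0 ∨ y k ω = 1)
    (hw01 : ∀ k ω, w k ω = 0 ∨ w k ω = 1)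
    (hymeas : ∀ k, Measurable (y k)) (hwmeas : ∀ k, Measurable (w k))
    -- (i) all y_k have the same distribution
    (hid : ∀ k, 1 ≤ k → IdentDistrib (y k) (y 1) P P)
    -- (ii) y_k is independent of σ({y_1,…,y_{k−1}} ∪ {w_1,…,w_k})
    (hindep : ∀ k, 1 ≤ k → Indep
      (MeasurableSpace.comap (y k) inferInstance)
      ((⨆ i ∈ Set.Icc 1 (k - 1), MeasurableSpace.comap (y i) inferInstance) ⊔
        (⨆ i ∈ Set.Icc 1 k, MeasurableSpace.comap (w i) inferInstance)) P)
    -- (iii) almost surely w_k = 1 infinitely often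
    (hinf : ∀ᵐ ω ∂P, {k : ℕ | 1 ≤ k ∧ w k ω = 1}.Infinite)
    -- the hitting times
    (τ : ℕ → Ω → ℕ)
    (hτ1 : ∀ ω, τ 1 ω = sInf {k : ℕ | 1 ≤ k ∧ w k ω = 1})
    (hτs : ∀ j, 1 ≤ j → ∀ ω, τ (j + 1) ω = sInf {k : ℕ | τ j ω < k ∧ w k ω = 1}) :
    -- conclusions: mutual independence, identical distribution, and the SLLN limit
    iIndepFun
      (fun j : {j : ℕ // 1 ≤ j} => fun ω => y (τ j.1 ω) ω) P ∧
    (∀ j, 1 ≤ j → IdentDistrib (fun ω => y (τ j ω) ω) (y 1) P P) ∧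
    ∀ᵐ ω ∂P, Tendsto (fun N : ℕ => (∑ j ∈ Finset.Icc 1 N, y (τ j ω) ω) / (N : ℝ))
      atTop (𝓝 (∫ ω, y 1 ω ∂P)) := by
  classical
  set Z : ℕ → Ω → ℝ := fun j ω => y (τ j ω) ω with hZdef
  set cnt : ℕ → Ω → ℕ := fun k ω => ∑ i ∈ Finset.Ioc 0 k, if w i ω = 1 then 1 else 0
    with hcntdef
  set G : Set Ω := {ω | {k : ℕ | 1 ≤ k ∧ w k ω = 1}.Infinite} with hGdef
  -- measurability of τ
  have hτmeas : ∀ j, 1 ≤ j → Measurable (τ j) := by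
    intro j hj
    induction j, hj using Nat.le_induction with
    | base =>
      have : τ 1 = fun ω => sInf {k | 1 ≤ k ∧ w k ω = 1} := funext hτ1
      rw [this]
      exact measurable_sInf_nat fun k =>
        (MeasurableSet.const _).inter ((hwmeas k) (measurableSet_singleton 1))
    | succ j hj IH =>
      have : τ (j + 1) = fun ω => sInf {k | τ j ω < k ∧ w k ω = 1} := funext (hτs j hj)
      rw [this]
      exact measurable_sInf_nat fun k =>
        ((IH (measurableSet_Iio (a := k)))).inter ((hwmeas k) (measurableSet_singleton 1))
  have hZmeas : ∀ j, 1 ≤ j → Measurable (Z j) := fun j hj =>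
    measurable_comp_nat hymeas (hτmeas j hj)
  -- arithmetic facts about cnt
  have hcnt_mono : ∀ ω, ∀ a b : ℕ, a ≤ b → cnt a ω ≤ cnt b ω := by
    intro ω a b hab
    exact Finset.sum_le_sum_of_subset (Finset.Ioc_subset_Ioc le_rfl hab)
  have hcnt_add : ∀ ω, ∀ a b : ℕ, a ≤ b →
      cnt b ω = cnt a ω + ∑ i ∈ Finset.Ioc a b, if w i ω = 1 then 1 else 0 := by
    intro ω a b hab
    exact (Finset.sum_Ioc_consecutive _ (Nat.zero_le a) hab).symm
  have hcnt_succ : ∀ ω, ∀ k : ℕ, 1 ≤ k → w k ω = 1 → cnt k ω = cnt (k - 1) ω + 1 := by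
    intro ω k hk hwk
    have h1 : k - 1 ≤ k := Nat.sub_le k 1
    rw [hcnt_add ω (k - 1) k h1]
    have h2 : Finset.Ioc (k - 1) k = {k} := by
      ext x
      simp only [Finset.mem_Ioc, Finset.mem_singleton]
      omega
    rw [h2, Finset.sum_singleton, if_pos hwk]
  -- strict growth of cnt between hitting points
  have hcnt_strict : ∀ ω, ∀ a b : ℕ, 1 ≤ a → a < b → w a ω = 1 →
      cnt (a - 1) ω < cnt (b - 1) ω := by
    intro ω a b ha hab hwa
    have h1 : a ≤ b - 1 := Nat.le_sub_one_of_lt hab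
    calc cnt (a - 1) ω < cnt a ω := by
          rw [hcnt_succ ω a ha hwa]; omega
      _ ≤ cnt (b - 1) ω := hcnt_mono ω a (b - 1) h1
  -- forward characterization of τ on G
  have hfwd : ∀ ω ∈ G, ∀ j, 1 ≤ j →
      1 ≤ τ j ω ∧ w (τ j ω) ω = 1 ∧ cnt (τ j ω - 1) ω = j - 1 := by
    intro ω hω j hj
    induction j, hj using Nat.le_induction with
    | base =>
      have hne : {k : ℕ | 1 ≤ k ∧ w k ω = 1}.Nonempty := hω.nonempty
      have hmem := Nat.sInf_mem hne
      rw [← hτ1 ω] at hmem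
      refine ⟨hmem.1, hmem.2, ?_⟩
      simp only [Nat.sub_self]
      apply Finset.sum_eq_zero
      intro i hi
      rw [Finset.mem_Ioc] at hi
      have hilt : i < τ 1 ω := lt_of_le_of_lt hi.2 (Nat.sub_lt hmem.1 one_pos)
      rw [hτ1 ω] at hilt
      have : i ∉ {k : ℕ | 1 ≤ k ∧ w k ω = 1} := Nat.notMem_of_lt_sInf hilt
      simp only [Set.mem_setOf_eq, not_and] at this
      rw [if_neg (this hi.1)]
    | succ j hj IH =>
      obtain ⟨ht1, htw, htc⟩ := IH
      set t := τ j ω with htdef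
      have hTne : {k : ℕ | t < k ∧ w k ω = 1}.Nonempty := by
        obtain ⟨b, hb, hbt⟩ := hω.exists_gt t
        exact ⟨b, hbt, hb.2⟩
      have hmem := Nat.sInf_mem hTne
      rw [← hτs j hj ω] at hmem
      set u := τ (j + 1) ω with hudef
      have hu1 : 1 ≤ u := le_trans ht1 (le_of_lt hmem.1)
      refine ⟨hu1, hmem.2, ?_⟩
      have htu : t ≤ u - 1 := Nat.le_sub_one_of_lt hmem.1
      rw [hcnt_add ω t (u - 1) htu]
      have hzero : ∑ i ∈ Finset.Ioc t (u - 1), (if w i ω = 1 then 1 else 0) = 0 := by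
        apply Finset.sum_eq_zero
        intro i hi
        rw [Finset.mem_Ioc] at hi
        have hiu : i < u := lt_of_le_of_lt hi.2 (Nat.sub_lt hu1 one_pos)
        rw [hudef, hτs j hj ω] at hiu
        have : i ∉ {k : ℕ | t < k ∧ w k ω = 1} := Nat.notMem_of_lt_sInf hiu
        simp only [Set.mem_setOf_eq, not_and] at this
        rw [if_neg (this hi.1)]
      rw [hzero]
      have : cnt t ω = cnt (t - 1) ω + 1 := hcnt_succ ω t ht1 htw
      omega
  -- τ is determined by cnt on G
  have hchar : ∀ ω ∈ G, ∀ j, 1 ≤ j → ∀ k, 1 ≤ k →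
      (τ j ω = k ↔ (w k ω = 1 ∧ cnt (k - 1) ω = j - 1)) := by
    intro ω hω j hj k hk
    obtain ⟨ht1, htw, htc⟩ := hfwd ω hω j hj
    constructor
    · rintro rfl; exact ⟨htw, htc⟩
    · rintro ⟨hwk, hck⟩
      rcases lt_trichotomy (τ j ω) k with h | h | h
      · exact absurd (hcnt_strict ω (τ j ω) k ht1 h htw) (by omega)
      · exact h
      · exact absurd (hcnt_strict ω k (τ j ω) hk h hwk) (by omega)
  -- strict monotonicity of τ in j, on G
  have hτlt : ∀ ω ∈ G, ∀ j m, 1 ≤ j → j < m → τ j ω < τ m ω := by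
    intro ω hω j m hj hjm
    obtain ⟨hj1, hjw, hjc⟩ := hfwd ω hω j hj
    obtain ⟨hm1, hmw, hmc⟩ := hfwd ω hω m (le_trans hj (le_of_lt hjm))
    rcases lt_trichotomy (τ j ω) (τ m ω) with h | h | h
    · exact h
    · exact absurd (h ▸ hjc) (by omega)
    · exact absurd (hcnt_strict ω (τ m ω) (τ j ω) hm1 h hmw) (by omega)
  -- the w-measurable approximations to {τ j = k}
  set C : ℕ → ℕ → Set Ω := fun j k => {ω | w k ω = 1 ∧ cnt (k - 1) ω = j - 1} with hCdef
  have hCmeas : ∀ j k K, 1 ≤ k → k ≤ K →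
      MeasurableSet[⨆ i ∈ Set.Icc 1 K, MeasurableSpace.comap (w i) inferInstance] (C j k) := by
    intro j k K hk hkK
    set M := ⨆ i ∈ Set.Icc 1 K, MeasurableSpace.comap (w i) inferInstance with hM
    have hwM : ∀ i, 1 ≤ i → i ≤ K → Measurable[M] (w i) := by
      intro i h1 h2
      rw [measurable_iff_comap_le]
      exact le_iSup₂ (f := fun i (_ : i ∈ Set.Icc 1 K) =>
        MeasurableSpace.comap (w i) inferInstance) i ⟨h1, h2⟩
    have hcntM : Measurable[M] (cnt (k - 1)) := by
      apply Finset.measurable_sum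
      intro i hi
      rw [Finset.mem_Ioc] at hi
      have h1 : 1 ≤ i := hi.1
      have h2 : i ≤ K := le_trans hi.2 (le_trans (Nat.sub_le k 1) hkK)
      exact Measurable.ite ((hwM i h1 h2) (measurableSet_singleton 1))
        measurable_const measurable_const
    have : C j k = w k ⁻¹' {1} ∩ cnt (k - 1) ⁻¹' {j - 1} := by
      ext ω; simp [hCdef]
    rw [this]
    exact ((hwM k hk hkK) (measurableSet_singleton 1)).inter
      (hcntM (measurableSet_singleton (j - 1)))
  have hCchar : ∀ ω ∈ G, ∀ j, 1 ≤ j → ∀ k, 1 ≤ k → (ω ∈ C j k ↔ τ j ω = k) := by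
    intro ω hω j hj k hk
    rw [hchar ω hω j hj k hk]
    rfl
  -- null complement of G
  have hGnull : P Gᶜ = 0 := by
    have := ae_iff.mp hinf
    simpa [hGdef, Set.compl_setOf] using this
  have hPG : ∀ s t : Set Ω, (∀ ω ∈ G, (ω ∈ s ↔ ω ∈ t)) → P s = P t := by
    intro s t h
    apply measure_congr
    filter_upwards [hinf] with ω hω
    exact eq_iff_iff.mpr (h ω hω)
  -- THE MAIN LEMMA
  have hmain : ∀ S : Finset ℕ, (∀ j ∈ S, 1 ≤ j) → ∀ A : ℕ → Set ℝ,
      (∀ j ∈ S, MeasurableSet (A j)) →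
      P (⋂ j ∈ S, Z j ⁻¹' A j) = ∏ j ∈ S, P (y 1 ⁻¹' A j) := by
    intro S
    induction S using Finset.induction_on_max with
    | empty => intro _ A _; simp
    | insert m S' hlt IH =>
      intro hS A hA
      have hm1 : 1 ≤ m := hS m (Finset.mem_insert_self m S')
      have hS' : ∀ j ∈ S', 1 ≤ j := fun j hj => hS j (Finset.mem_insert_of_mem hj)
      have hmS' : m ∉ S' := fun h => lt_irrefl m (hlt m h)
      set E' : Set Ω := ⋂ j ∈ S', Z j ⁻¹' A j with hE'def
      set E : Set Ω := ⋂ j ∈ insert m S', Z j ⁻¹' A j with hEdef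
      have hEsplit : E = Z m ⁻¹' A m ∩ E' := by
        rw [hEdef, Finset.set_biInter_insert]
      have hE'meas : MeasurableSet E' :=
        MeasurableSet.biInter S'.countable_toSet fun j hj =>
          (hZmeas j (hS' j hj)) (hA j (Finset.mem_insert_of_mem hj))
      have hEmeas : MeasurableSet E := by
        rw [hEsplit]
        exact ((hZmeas m hm1) (hA m (Finset.mem_insert_self m S'))).inter hE'meas
      have hτk : ∀ k : ℕ, MeasurableSet {ω | τ m ω = k} := fun k =>
        (hτmeas m hm1) (measurableSet_singleton k)
      set c : ENNReal := P (y 1 ⁻¹' A m) with hcdef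
      -- the nice events
      set U : ℕ → ℕ → Set Ω := fun j k =>
        ⋃ (k' : ℕ) (_ : 1 ≤ k') (_ : k' < k), C j k' ∩ y k' ⁻¹' A j with hUdef
      set F : ℕ → Set Ω := fun k => C m k ∩ ⋂ j ∈ S', U j k with hFdef
      -- identification of events on G
      have hfactE' : ∀ k, 1 ≤ k → ∀ ω ∈ G, (ω ∈ F k ↔ (τ m ω = k ∧ ω ∈ E')) := by
        intro k hk ω hω
        have hCm : ω ∈ C m k ↔ τ m ω = k := hCchar ω hω m hm1 k hk
        constructor
        · rintro ⟨hc, hu⟩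
          have hτm : τ m ω = k := hCm.mp hc
          refine ⟨hτm, ?_⟩
          rw [hE'def]
          simp only [Set.mem_iInter, Set.mem_preimage]
          intro j hj
          have huj : ω ∈ U j k := by
            simp only [Set.mem_iInter] at hu
            exact hu j hj
          rw [hUdef] at huj
          simp only [Set.mem_iUnion, Set.mem_inter_iff, Set.mem_preimage] at huj
          obtain ⟨k', h1, h2, hC, hy⟩ := huj
          have : τ j ω = k' := (hCchar ω hω j (hS' j hj) k' h1).mp hC
          rw [hZdef]
          simpa [this] using hy
        · rintro ⟨hτm, hE'⟩
          refine ⟨hCm.mpr hτm, ?_⟩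
          simp only [Set.mem_iInter]
          intro j hj
          have hjm : j < m := hlt j hj
          have hτj := hτlt ω hω j m (hS' j hj) hjm
          rw [hτm] at hτj
          obtain ⟨hj1, _, _⟩ := hfwd ω hω j (hS' j hj)
          rw [hUdef]
          simp only [Set.mem_iUnion, Set.mem_inter_iff, Set.mem_preimage]
          refine ⟨τ j ω, hj1, hτj, (hCchar ω hω j (hS' j hj) (τ j ω) hj1).mpr rfl, ?_⟩
          rw [hE'def] at hE'
          simp only [Set.mem_iInter, Set.mem_preimage] at hE'
          exact hE' j hj
      have hfactE : ∀ k, 1 ≤ k → ∀ ω ∈ G,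
          (ω ∈ y k ⁻¹' A m ∩ F k ↔ (τ m ω = k ∧ ω ∈ E)) := by
        intro k hk ω hω
        rw [hEsplit]
        constructor
        · rintro ⟨hy, hF⟩
          obtain ⟨hτm, hE'⟩ := (hfactE' k hk ω hω).mp hF
          refine ⟨hτm, ?_, hE'⟩
          rw [Set.mem_preimage, hZdef]
          simpa [hτm] using hy
        · rintro ⟨hτm, hZm, hE'⟩
          refine ⟨?_, (hfactE' k hk ω hω).mpr ⟨hτm, hE'⟩⟩
          rw [Set.mem_preimage] at hZm ⊢
          rw [hZdef] at hZm
          simpa [hτm] using hZm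
      -- τ m ≥ 1 on G
      have hτ0 : ∀ X : Set Ω, P (X ∩ {ω | τ m ω = 0}) = 0 := by
        intro X
        apply measure_mono_null _ hGnull
        intro ω ⟨_, h0⟩
        intro hωG
        obtain ⟨h1, _, _⟩ := hfwd ω hωG m hm1
        simp only [Set.mem_setOf_eq] at h0
        omega
      -- decomposition over the value of τ m
      have hdecomp : ∀ X : Set Ω, MeasurableSet X →
          P X = ∑' k : ℕ, P (X ∩ {ω | τ m ω = k}) := by
        intro X hX
        have hcover : X = ⋃ k : ℕ, X ∩ {ω | τ m ω = k} := by
          ext ω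
          simp only [Set.mem_iUnion, Set.mem_inter_iff, Set.mem_setOf_eq]
          exact ⟨fun h => ⟨τ m ω, h, rfl⟩, fun ⟨k, h, _⟩ => h⟩
        have hdisj : Pairwise (Function.onFun Disjoint fun k => X ∩ {ω | τ m ω = k}) := by
          intro k k' hkk'
          simp only [Function.onFun]
          apply Set.disjoint_left.mpr
          rintro ω ⟨_, hk⟩ ⟨_, hk'⟩
          exact hkk' (hk.symm.trans hk')
        have := measure_iUnion (μ := P) hdisj (fun k => hX.inter (hτk k))
        rw [← hcover] at this
        exact this
      -- measurability of F k in the big σ-algebra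
      have hFmeas : ∀ k, 1 ≤ k → MeasurableSet[
          (⨆ i ∈ Set.Icc 1 (k - 1), MeasurableSpace.comap (y i) inferInstance) ⊔
          (⨆ i ∈ Set.Icc 1 k, MeasurableSpace.comap (w i) inferInstance)] (F k) := by
        intro k hk
        set MY := ⨆ i ∈ Set.Icc 1 (k - 1), MeasurableSpace.comap (y i) inferInstance with hMY
        set MW := ⨆ i ∈ Set.Icc 1 k, MeasurableSpace.comap (w i) inferInstance with hMW
        have hCle : ∀ j k', 1 ≤ k' → k' ≤ k → MeasurableSet[MY ⊔ MW] (C j k') := by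
          intro j k' h1 h2
          exact (le_sup_right : MW ≤ MY ⊔ MW) _ (hCmeas j k' k h1 h2)
        have hyle : ∀ k', 1 ≤ k' → k' < k → ∀ s : Set ℝ, MeasurableSet s →
            MeasurableSet[MY ⊔ MW] (y k' ⁻¹' s) := by
          intro k' h1 h2 s hs
          apply (le_sup_left : MY ≤ MY ⊔ MW)
          have : MeasurableSpace.comap (y k') inferInstance ≤ MY :=
            le_iSup₂ (f := fun i (_ : i ∈ Set.Icc 1 (k - 1)) =>
              MeasurableSpace.comap (y i) inferInstance) k' ⟨h1, Nat.le_sub_one_of_lt h2⟩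
          exact this _ ⟨s, hs, rfl⟩
        apply MeasurableSet.inter
        · exact hCle m k hk le_rfl
        · apply MeasurableSet.biInter S'.countable_toSet
          intro j hj
          apply MeasurableSet.iUnion
          intro k'
          apply MeasurableSet.iUnion
          intro h1
          apply MeasurableSet.iUnion
          intro h2
          exact (hCle j k' h1 (le_of_lt h2)).inter
            (hyle k' h1 h2 (A j) (hA j (Finset.mem_insert_of_mem hj)))
      -- termwise identity
      have hterm : ∀ k : ℕ, P (E ∩ {ω | τ m ω = k}) = c * P (E' ∩ {ω | τ m ω = k}) := by
        intro k
        rcases Nat.eq_zero_or_pos k with rfl | hk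
        · rw [hτ0 E, hτ0 E', mul_zero]
        · have e1 : P (E ∩ {ω | τ m ω = k}) = P (y k ⁻¹' A m ∩ F k) := by
            apply hPG
            intro ω hω
            rw [hfactE k hk ω hω]
            constructor
            · rintro ⟨hE, hτ⟩; exact ⟨hτ, hE⟩
            · rintro ⟨hτ, hE⟩; exact ⟨hE, hτ⟩
          have e2 : P (y k ⁻¹' A m ∩ F k) = P (y k ⁻¹' A m) * P (F k) := by
            exact (Indep_iff _ _ P).mp (hindep k hk) _ _
              ⟨A m, hA m (Finset.mem_insert_self m S'), rfl⟩ (hFmeas k hk)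
          have e3 : P (y k ⁻¹' A m) = c :=
            (hid k hk).measure_mem_eq (hA m (Finset.mem_insert_self m S'))
          have e4 : P (F k) = P (E' ∩ {ω | τ m ω = k}) := by
            apply hPG
            intro ω hω
            rw [hfactE' k hk ω hω]
            constructor
            · rintro ⟨hτ, hE⟩; exact ⟨hE, hτ⟩
            · rintro ⟨hE, hτ⟩; exact ⟨hτ, hE⟩
          rw [e1, e2, e3, e4]
      calc P E = ∑' k : ℕ, P (E ∩ {ω | τ m ω = k}) := hdecomp E hEmeas
        _ = ∑' k : ℕ, c * P (E' ∩ {ω | τ m ω = k}) := by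
            exact tsum_congr fun k => hterm k
        _ = c * ∑' k : ℕ, P (E' ∩ {ω | τ m ω = k}) := ENNReal.tsum_mul_left
        _ = c * P E' := by rw [← hdecomp E' hE'meas]
        _ = ∏ j ∈ insert m S', P (y 1 ⁻¹' A j) := by
            rw [Finset.prod_insert hmS', IH hS' A
              (fun j hj => hA j (Finset.mem_insert_of_mem hj))]
      -- done with main lemma
  -- singleton consequence
  have hsingle : ∀ j, 1 ≤ j → ∀ s : Set ℝ, MeasurableSet s →
      P (Z j ⁻¹' s) = P (y 1 ⁻¹' s) := by
    intro j hj s hs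
    have := hmain {j} (by simpa using hj) (fun _ => s) (fun _ _ => hs)
    simpa using this
  -- identical distribution
  have hident : ∀ j, 1 ≤ j → IdentDistrib (Z j) (y 1) P P := by
    intro j hj
    refine ⟨(hZmeas j hj).aemeasurable, (hymeas 1).aemeasurable, ?_⟩
    apply Measure.ext
    intro s hs
    rw [Measure.map_apply (hZmeas j hj) hs, Measure.map_apply (hymeas 1) hs]
    exact hsingle j hj s hs
  refine ⟨?_, fun j hj => hident j hj, ?_⟩
  · -- mutual independence
    rw [iIndepFun_iff_measure_inter_preimage_eq_mul]
    intro S sets hsets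
    set S₀ : Finset ℕ := S.image Subtype.val with hS₀
    set A : ℕ → Set ℝ := fun n =>
      ⋂ (i : {i // i ∈ S}) (_ : (i.1 : ℕ) = n), sets i.1 with hA
    have hAmeas : ∀ n, MeasurableSet (A n) := fun n =>
      MeasurableSet.iInter fun i => MeasurableSet.iInter fun _ => hsets i.1 i.2
    have hAeq : ∀ i ∈ S, A (i.1 : ℕ) = sets i := by
      intro i hi
      apply Set.eq_of_subset_of_subset
      · intro x hx
        simp only [hA, Set.mem_iInter] at hx
        exact hx ⟨i, hi⟩ rfl
      · intro x hx
        simp only [hA, Set.mem_iInter]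
        rintro ⟨i', hi'⟩ h
        have : i' = i := Subtype.ext h
        subst this
        exact hx
    have h1 : ∀ n ∈ S₀, 1 ≤ n := by
      intro n hn
      rw [hS₀, Finset.mem_image] at hn
      obtain ⟨i, _, rfl⟩ := hn
      exact i.2
    have hL : (⋂ i ∈ S, (fun ω => y (τ (i : {j : ℕ // 1 ≤ j}).1 ω) ω) ⁻¹' sets i) =
        ⋂ n ∈ S₀, Z n ⁻¹' A n := by
      ext ω
      simp only [Set.mem_iInter, Set.mem_preimage, hS₀, Finset.mem_image]
      constructor
      · rintro h n ⟨i, hi, rfl⟩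
        rw [hAeq i hi]
        exact h i hi
      · intro h i hi
        have := h i.1 ⟨i, hi, rfl⟩
        rwa [hAeq i hi] at this
    have hprod : ∏ n ∈ S₀, P (y 1 ⁻¹' A n) = ∏ i ∈ S, P (y 1 ⁻¹' sets i) := by
      rw [hS₀, Finset.prod_image (fun i _ i' _ h => Subtype.ext h)]
      exact Finset.prod_congr rfl fun i hi => by rw [hAeq i hi]
    calc P (⋂ i ∈ S, (fun ω => y (τ (i : {j : ℕ // 1 ≤ j}).1 ω) ω) ⁻¹' sets i)
        = P (⋂ n ∈ S₀, Z n ⁻¹' A n) := by rw [hL]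
      _ = ∏ n ∈ S₀, P (y 1 ⁻¹' A n) := hmain S₀ h1 A (fun n _ => hAmeas n)
      _ = ∏ i ∈ S, P (y 1 ⁻¹' sets i) := hprod
      _ = ∏ i ∈ S, P ((fun ω => y (τ (i : {j : ℕ // 1 ≤ j}).1 ω) ω) ⁻¹' sets i) :=
          Finset.prod_congr rfl fun i hi => (hsingle i.1 i.2 (sets i) (hsets i hi)).symm
  · -- SLLN
    set X : ℕ → Ω → ℝ := fun n => Z (n + 1) with hX
    have hint : Integrable (X 0) P := by
      have hy1 : Integrable (y 1) P := by
        apply (integrable_const (1 : ℝ)).mono' (hymeas 1).aestronglyMeasurable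
        filter_upwards with ω
        rcases hy01 1 ω with h | h <;> simp [h]
      exact (hident 1 le_rfl).integrable_iff.mpr hy1
    have hpair : Pairwise (Function.onFun (IndepFun · · P) X) := by
      intro i j hij
      rw [Function.onFun, indepFun_iff_measure_inter_preimage_eq_mul]
      intro s t hs ht
      have hne : i + 1 ≠ j + 1 := by omega
      set A : ℕ → Set ℝ := fun n => if n = i + 1 then s else t with hA
      have h2 := hmain {i + 1, j + 1} (by intro j hj; simp at hj; omega) A
        (by intro n hn; simp only [hA]; split_ifs; exacts [hs, ht])
      have hAi : A (i + 1) = s := by simp [hA]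
      have hAj : A (j + 1) = t := by simp [hA, hne.symm, Ne.symm hij]
      have hL : (⋂ n ∈ ({i + 1, j + 1} : Finset ℕ), Z n ⁻¹' A n) =
          X i ⁻¹' s ∩ X j ⁻¹' t := by
        rw [Finset.set_biInter_insert, Finset.set_biInter_singleton, hAi, hAj]
      have hR : ∏ n ∈ ({i + 1, j + 1} : Finset ℕ), P (y 1 ⁻¹' A n) =
          P (y 1 ⁻¹' s) * P (y 1 ⁻¹' t) := by
        rw [Finset.prod_insert (by simp [hne, hij]), Finset.prod_singleton, hAi, hAj]
      rw [hL, hR] at h2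
      rw [h2, hsingle (i + 1) (by omega) s hs, hsingle (j + 1) (by omega) t ht]
    have hidX : ∀ i, IdentDistrib (X i) (X 0) P P := fun i =>
      (hident (i + 1) (by omega)).trans (hident 1 le_rfl).symm
    have hslln := strong_law_ae_real X hint hpair hidX
    have hEX : P[X 0] = ∫ ω, y 1 ω ∂P := (hident 1 le_rfl).integral_eq
    rw [hEX] at hslln
    filter_upwards [hslln] with ω hω
    have hsum : ∀ N : ℕ, ∑ j ∈ Finset.Icc 1 N, Z j ω = ∑ i ∈ Finset.range N, X i ω := by
      intro N
      rw [show Finset.Icc 1 N = Finset.Ico 1 (N + 1) by rw [Finset.Ico_add_one_right_eq_Icc],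
        Finset.sum_Ico_eq_sum_range]
      simp only [hX, add_comm, Nat.add_sub_cancel]
    have : (fun N : ℕ => (∑ j ∈ Finset.Icc 1 N, y (τ j ω) ω) / (N : ℝ)) =
        fun N : ℕ => (∑ i ∈ Finset.range N, X i ω) / (N : ℝ) := by
      funext N
      rw [← hsum N]
    rw [this]
    exact hω
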